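/- Let p be a prime, G a finite group, S a normal subgroup of G of order coprime to p, and P a p-subgroup of G such that G = S·C_G(P). Then for every p-subgroup Q of G with Q ≤ C_G(P), the normalizer of Q factorizes as N_G(Q) = C_S(Q) · N_{C_G(P)}(Q), where C_S(Q) = S ∩ C_G(Q) and N_{C_G(P)}(Q) = C_G(P) ∩ N_G(Q): every element of N_G(Q) is a product of an element of S centralizing Q and an element of C_G(P) normalizing Q. -/

import Mathlib

open Subgroup Pointwise

/-- A `p`-subgroup intersects a subgroup of coprime order trivially. -/
private lemma aux_inf_bot {p : ℕ} (hp : p.Prime) {G : Type*} [Group G] [Finite G]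
    {A B : Subgroup G} (hB : IsPGroup p B) (hA : Nat.Coprime (Nat.card A) p) :
    A ⊓ B = ⊥ := by
  ext x
  simp only [Subgroup.mem_inf, Subgroup.mem_bot]
  constructor
  · rintro ⟨hxA, hxB⟩
    obtain ⟨k, hk⟩ := hB ⟨x, hxB⟩
    have h1 : x ^ p ^ k = 1 := by
      have := congrArg (Subtype.val) hk
      simpa using this
    have d1 : orderOf x ∣ p ^ k := orderOf_dvd_of_pow_eq_one h1
    have d2 : orderOf x ∣ Nat.card A := by
      rw [← Subgroup.orderOf_mk x hxA]
      exact orderOf_dvd_natCard _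
    have hcop : Nat.Coprime (orderOf x) (p ^ k) :=
      Nat.Coprime.coprime_dvd_left d2 (hA.pow_right k)
    exact orderOf_eq_one_iff.mp (hcop.eq_one_of_dvd d1)
  · rintro rfl
    exact ⟨one_mem _, one_mem _⟩

/-- If `A, B ≤ H` and every element of `H` normalizes `A`, then every element of
`A ⊔ B` is a product `a * b`. -/
private lemma aux_prod {G : Type*} [Group G] {H A B : Subgroup G}
    (hA : A ≤ H) (hB : B ≤ H)
    (hnorm : ∀ h ∈ H, ∀ x ∈ A, h * x * h⁻¹ ∈ A) :
    ∀ x ∈ A ⊔ B, ∃ a ∈ A, ∃ b ∈ B, x = a * b := by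
  let K : Subgroup G :=
    { carrier := {x | ∃ a ∈ A, ∃ b ∈ B, x = a * b}
      one_mem' := ⟨1, one_mem _, 1, one_mem _, (one_mul 1).symm⟩
      mul_mem' := by
        rintro x y ⟨a, ha, b, hb, rfl⟩ ⟨a', ha', b', hb', rfl⟩
        refine ⟨a * (b * a' * b⁻¹), mul_mem ha (hnorm b (hB hb) a' ha'), b * b',
          mul_mem hb hb', ?_⟩
        group
      inv_mem' := by
        rintro x ⟨a, ha, b, hb, rfl⟩
        refine ⟨b⁻¹ * a⁻¹ * b⁻¹⁻¹, hnorm b⁻¹ (inv_mem (hB hb)) a⁻¹ (inv_mem ha), b⁻¹,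
          inv_mem hb, ?_⟩
        group }
  have hAK : A ≤ K := fun a ha => show ∃ a' ∈ A, ∃ b ∈ B, a = a' * b from
    ⟨a, ha, 1, one_mem _, (mul_one a).symm⟩
  have hBK : B ≤ K := fun b hb => show ∃ a ∈ A, ∃ b' ∈ B, b = a * b' from
    ⟨1, one_mem _, b, hb, (one_mul b).symm⟩
  exact fun x hx => sup_le hAK hBK hx

/-- With `S ⊴ G` of order coprime to `p` and `P` a `p`-subgroup with
`G = S·C_G(P)`, for every `p`-subgroup `Q ≤ C_G(P)` one has the factorisation
`N_G(Q) = C_S(Q) · N_{C_G(P)}(Q)`. -/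
theorem stmt_5 (p : ℕ) (hp : p.Prime) (G : Type*) [Group G] [Finite G]
    (S : Subgroup G) (hS : S.Normal) (hScop : Nat.Coprime (Nat.card S) p)
    (P : Subgroup G) (hP : IsPGroup p P)
    (hfact : ∀ g : G, ∃ s ∈ S, ∃ c ∈ Subgroup.centralizer (P : Set G), g = s * c) :
    ∀ Q : Subgroup G, IsPGroup p Q → Q ≤ Subgroup.centralizer (P : Set G) →
      ∀ g ∈ Subgroup.normalizer (Q : Set G),
        ∃ s, s ∈ S ∧ s ∈ Subgroup.centralizer (Q : Set G) ∧
          ∃ c, c ∈ Subgroup.centralizer (P : Set G) ∧ c ∈ Subgroup.normalizer (Q : Set G) ∧ g = s * c := by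
  haveI := Fact.mk hp
  set H := Subgroup.centralizer (P : Set G) with hHdef
  intro Q hQ hQH g hg
  obtain ⟨s, hsS, c, hcH, rfl⟩ := hfact g
  -- `S ⊓ Q = ⊥`
  have hSQ : S ⊓ Q = ⊥ := aux_inf_bot hp hQ hScop
  set S₀ : Subgroup G := S ⊓ H with hS₀def
  have hS₀H : S₀ ≤ H := inf_le_right
  have hS₀S : S₀ ≤ S := inf_le_left
  have hS₀norm : ∀ h ∈ H, ∀ x ∈ S₀, h * x * h⁻¹ ∈ S₀ := by
    intro h hh x hx
    have hx' := Subgroup.mem_inf.mp hx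
    exact Subgroup.mem_inf.mpr ⟨hS.conj_mem x hx'.1 h, mul_mem (mul_mem hh hx'.2) (inv_mem hh)⟩
  set M : Subgroup G := S₀ ⊔ Q with hMdef
  have hQM : Q ≤ M := le_sup_right
  have hS₀M : S₀ ≤ M := le_sup_left
  have hMH : M ≤ H := sup_le hS₀H hQH
  have hdec : ∀ x ∈ M, ∃ a ∈ S₀, ∃ q ∈ Q, x = a * q := aux_prod hS₀H hQH hS₀norm
  -- the conjugate subgroup `Q' = c Q c⁻¹ = s⁻¹ Q s`
  set Q' : Subgroup G := MulAut.conj c • Q with hQ'def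
  have hQ'mem : ∀ x : G, x ∈ Q' ↔ c⁻¹ * x * c ∈ Q := by
    intro x
    rw [hQ'def, Subgroup.mem_pointwise_smul_iff_inv_smul_mem]
    simp [MulAut.conj_apply, mul_assoc]
  have hnorm := Subgroup.mem_normalizer_iff.mp hg
  have hstar : ∀ x : G, x ∈ Q' ↔ s * x * s⁻¹ ∈ Q := by
    intro x
    rw [hQ'mem]
    constructor
    · intro h
      have := (hnorm (c⁻¹ * x * c)).mp h
      have e : s * c * (c⁻¹ * x * c) * (s * c)⁻¹ = s * x * s⁻¹ := by group
      rwa [e] at this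
    · intro h
      apply (hnorm (c⁻¹ * x * c)).mpr
      have e : s * c * (c⁻¹ * x * c) * (s * c)⁻¹ = s * x * s⁻¹ := by group
      rwa [e]
  have hQ'H : Q' ≤ H := by
    intro x hx
    have hq : c⁻¹ * x * c ∈ Q := (hQ'mem x).mp hx
    have : x = c * (c⁻¹ * x * c) * c⁻¹ := by group
    rw [this]
    exact mul_mem (mul_mem hcH (hQH hq)) (inv_mem hcH)
  have hQ'M : Q' ≤ M := by
    intro x hx
    have hq : s * x * s⁻¹ ∈ Q := (hstar x).mp hx
    have haS : x * (s * x * s⁻¹)⁻¹ ∈ S := by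
      have : x * (s * x * s⁻¹)⁻¹ = (x * s * x⁻¹) * s⁻¹ := by group
      rw [this]
      exact mul_mem (hS.conj_mem s hsS x) (inv_mem hsS)
    have haH : x * (s * x * s⁻¹)⁻¹ ∈ H := mul_mem (hQ'H hx) (inv_mem (hQH hq))
    have : x = (x * (s * x * s⁻¹)⁻¹) * (s * x * s⁻¹) := by group
    rw [this]
    exact mul_mem (hS₀M (Subgroup.mem_inf.mpr ⟨haS, haH⟩)) (hQM hq)
  -- cardinalities
  have hcardQ' : Nat.card Q' = Nat.card Q :=
    (Nat.card_congr (Subgroup.equivSMul (MulAut.conj c) Q).toEquiv).symm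
  have hcardQM : Nat.card (Q.subgroupOf M) = Nat.card Q :=
    Nat.card_congr (Subgroup.subgroupOfEquivOfLe hQM).toEquiv
  have hcardQ'M : Nat.card (Q'.subgroupOf M) = Nat.card Q' :=
    Nat.card_congr (Subgroup.subgroupOfEquivOfLe hQ'M).toEquiv
  have hcardS₀M : Nat.card (S₀.subgroupOf M) = Nat.card S₀ :=
    Nat.card_congr (Subgroup.subgroupOfEquivOfLe hS₀M).toEquiv
  have hS₀cop : Nat.Coprime (Nat.card (S₀.subgroupOf M)) p := by
    rw [hcardS₀M]
    exact Nat.Coprime.coprime_dvd_left (Subgroup.card_dvd_of_le hS₀S) hScop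
  -- p-groups inside M
  have hQMp : IsPGroup p (Q.subgroupOf M) :=
    hQ.of_equiv (Subgroup.subgroupOfEquivOfLe hQM).symm
  have hQ'p : IsPGroup p Q' := hQ.of_equiv (Subgroup.equivSMul (MulAut.conj c) Q)
  have hQ'Mp : IsPGroup p (Q'.subgroupOf M) :=
    hQ'p.of_equiv (Subgroup.subgroupOfEquivOfLe hQ'M).symm
  -- every Sylow p-subgroup of M has cardinality at most card Q
  have hsylow_card : ∀ R : Sylow p ↥M, Nat.card (R : Subgroup ↥M) ≤ Nat.card Q := by
    intro R
    have hRS₀ : S₀.subgroupOf M ⊓ (R : Subgroup ↥M) = ⊥ := aux_inf_bot hp R.2 hS₀cop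
    have hex : ∀ r : (R : Subgroup ↥M), ∃ q : Q, ∃ a ∈ S₀, ((r : ↥M) : G) = a * q := by
      intro r
      obtain ⟨a, ha, q, hq, hx⟩ := hdec _ (r : ↥M).2
      exact ⟨⟨q, hq⟩, a, ha, hx⟩
    choose f a haS hfa using hex
    have hinj : Function.Injective f := by
      intro r r' hff
      have h1 : ((r : ↥M) : G) * ((r' : ↥M) : G)⁻¹ = a r * (a r')⁻¹ := by
        rw [hfa r, hfa r', hff]
        group
      have hmem : ((r : ↥M) * (r' : ↥M)⁻¹ : ↥M) ∈ S₀.subgroupOf M ⊓ (R : Subgroup ↥M) := by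
        refine Subgroup.mem_inf.mpr ⟨Subgroup.mem_subgroupOf.mpr ?_, mul_mem r.2 (inv_mem r'.2)⟩
        have : (((r : ↥M) * (r' : ↥M)⁻¹ : ↥M) : G) = a r * (a r')⁻¹ := by
          push_cast
          exact h1
        rw [this]
        exact mul_mem (haS r) (inv_mem (haS r'))
      rw [hRS₀] at hmem
      have : (r : ↥M) = (r' : ↥M) := by
        have := Subgroup.mem_bot.mp hmem
        rwa [mul_inv_eq_one] at this
      exact Subtype.ext this
    exact Nat.card_le_card_of_injective f hinj
  -- Q.subgroupOf M is the unique-up-to-conj Sylow: any Sylow containing it equals it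
  obtain ⟨R, hQMR⟩ := hQMp.exists_le_sylow
  have hReq : (R : Subgroup ↥M) = Q.subgroupOf M := by
    refine (Subgroup.eq_of_le_of_card_ge hQMR ?_).symm
    rw [hcardQM]
    exact hsylow_card R
  obtain ⟨R', hQ'MR'⟩ := hQ'Mp.exists_le_sylow
  obtain ⟨m, hm⟩ := MulAction.exists_smul_eq (↥M) R' R
  have hconj : MulAut.conj m • (Q'.subgroupOf M) = Q.subgroupOf M := by
    have hle : MulAut.conj m • (Q'.subgroupOf M) ≤ Q.subgroupOf M := by
      have h1 : MulAut.conj m • (Q'.subgroupOf M) ≤ MulAut.conj m • (R' : Subgroup ↥M) :=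
        Subgroup.pointwise_smul_le_pointwise_smul_iff.mpr hQ'MR'
      have h2 : (↑(m • R') : Subgroup ↥M) = (R : Subgroup ↥M) := by rw [hm]
      rw [Sylow.coe_subgroup_smul] at h2
      rw [h2, hReq] at h1
      exact h1
    refine Subgroup.eq_of_le_of_card_ge hle ?_
    have e1 : Nat.card (MulAut.conj m • (Q'.subgroupOf M) : Subgroup ↥M)
        = Nat.card (Q'.subgroupOf M) :=
      (Nat.card_congr (Subgroup.equivSMul (MulAut.conj m) (Q'.subgroupOf M)).toEquiv).symm
    rw [e1, hcardQ'M, hcardQ', hcardQM]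
  -- membership translation
  have hmv : (m : G) ∈ M := m.2
  have hmem2 : ∀ x : G, x ∈ Q' ↔ (m : G) * x * (m : G)⁻¹ ∈ Q := by
    intro x
    constructor
    · intro hx
      have hxM : x ∈ M := hQ'M hx
      have hxQ' : (⟨x, hxM⟩ : ↥M) ∈ Q'.subgroupOf M := Subgroup.mem_subgroupOf.mpr hx
      have := Subgroup.smul_mem_pointwise_smul _ (MulAut.conj m) _ hxQ'
      rw [hconj] at this
      have h3 := Subgroup.mem_subgroupOf.mp this
      have e : ((MulAut.conj m • (⟨x, hxM⟩ : ↥M) : ↥M) : G) = (m : G) * x * (m : G)⁻¹ := by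
        show ((m * ⟨x, hxM⟩ * m⁻¹ : ↥M) : G) = (m : G) * x * (m : G)⁻¹
        push_cast
        rfl
      rwa [e] at h3
    · intro hx
      have hxM : x ∈ M := by
        have : x = (m : G)⁻¹ * ((m : G) * x * (m : G)⁻¹) * (m : G) := by group
        rw [this]
        exact mul_mem (mul_mem (inv_mem hmv) (hQM hx)) hmv
      have h3 : (MulAut.conj m • (⟨x, hxM⟩ : ↥M) : ↥M) ∈ Q.subgroupOf M := by
        apply Subgroup.mem_subgroupOf.mpr
        have e : ((MulAut.conj m • (⟨x, hxM⟩ : ↥M) : ↥M) : G) = (m : G) * x * (m : G)⁻¹ := by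
          show ((m * ⟨x, hxM⟩ * m⁻¹ : ↥M) : G) = (m : G) * x * (m : G)⁻¹
          push_cast
          rfl
        rw [e]
        exact hx
      rw [← hconj] at h3
      have := (Subgroup.smul_mem_pointwise_smul_iff (a := MulAut.conj m)
        (S := Q'.subgroupOf M) (x := (⟨x, hxM⟩ : ↥M))).mp h3
      exact Subgroup.mem_subgroupOf.mp this
  -- decompose m = q₀ * a'⁻¹ with q₀ ∈ Q, a' ∈ S₀
  obtain ⟨a', ha', q', hq', hmeq⟩ := hdec ((m : G))⁻¹ (inv_mem hmv)
  have hmval : (m : G) = q'⁻¹ * a'⁻¹ := by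
    rw [← inv_inv (m : G), hmeq]
    group
  -- the key: conjugation by s and by a'⁻¹ agree on membership in Q
  have hkey : ∀ x : G, s * x * s⁻¹ ∈ Q ↔ a'⁻¹ * x * a' ∈ Q := by
    intro x
    rw [← hstar, hmem2, hmval]
    have e : q'⁻¹ * a'⁻¹ * x * (q'⁻¹ * a'⁻¹)⁻¹ = q'⁻¹ * (a'⁻¹ * x * a') * q' := by group
    rw [e]
    constructor
    · intro h
      have : a'⁻¹ * x * a' = q' * (q'⁻¹ * (a'⁻¹ * x * a') * q') * q'⁻¹ := by group
      rw [this]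
      exact mul_mem (mul_mem hq' h) (inv_mem hq')
    · intro h
      exact mul_mem (mul_mem (inv_mem hq') h) hq'
  -- the element u := s * a'
  have huS : s * a' ∈ S := mul_mem hsS (hS₀S ha')
  have huN : s * a' ∈ Subgroup.normalizer (Q : Set G) := by
    rw [Subgroup.mem_normalizer_iff]
    intro h
    have e : s * (a' * h * a'⁻¹) * s⁻¹ = (s * a') * h * (s * a')⁻¹ := by group
    have := hkey (a' * h * a'⁻¹)
    rw [e] at this
    have e2 : a'⁻¹ * (a' * h * a'⁻¹) * a' = h := by group
    rw [e2] at this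
    exact this.symm
  have huC : s * a' ∈ Subgroup.centralizer (Q : Set G) := by
    rw [Subgroup.mem_centralizer_iff]
    intro h hh
    have hwS : (s * a') * h * (s * a')⁻¹ * h⁻¹ ∈ S := by
      have e : (s * a') * h * (s * a')⁻¹ * h⁻¹ = (s * a') * (h * (s * a')⁻¹ * h⁻¹) := by group
      rw [e]
      exact mul_mem huS (hS.conj_mem _ (inv_mem huS) h)
    have hwQ : (s * a') * h * (s * a')⁻¹ * h⁻¹ ∈ Q := by
      have h1 : (s * a') * h * (s * a')⁻¹ ∈ Q :=
        (Subgroup.mem_normalizer_iff.mp huN h).mp hh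
      exact mul_mem h1 (inv_mem hh)
    have hw1 : (s * a') * h * (s * a')⁻¹ * h⁻¹ = 1 := by
      have := Subgroup.mem_inf.mpr ⟨hwS, hwQ⟩
      rw [hSQ] at this
      exact Subgroup.mem_bot.mp this
    have hw : (s * a') * h * (s * a')⁻¹ = h := by rwa [mul_inv_eq_one] at hw1
    have : h * (s * a') = (s * a') * h := by
      conv_lhs => rw [← hw]
      group
    exact this
  refine ⟨s * a', huS, huC, a'⁻¹ * c, mul_mem (inv_mem (hS₀H ha')) hcH, ?_, by group⟩
  have e : a'⁻¹ * c = (s * a')⁻¹ * (s * c) := by group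
  rw [e]
  exact mul_mem (inv_mem huN) hg
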